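/- arXiv:1708.06070 — 12 statements merged into one kernel-verified Lean document; each statement's English description precedes it below -/
import Mathlib

section
/- Let G be a finite abstract simplicial complex and let X be a real-valued valuation on the subcomplexes of G with X(∅) = 0, i.e. X(A ∪ B) + X(A ∩ B) = X(A) + X(B) for all subcomplexes A, B. Then for every subcomplex A one has X(A) = Σ_{x ∈ A} (X(x̄) − X(x̄ \ {x})), where x̄ = {y : y ⊆ x, y ≠ ∅} is the closure of the simplex x. -/
/-- A finite abstract simplicial complex on a type `V`. -/
def IsSimplicialComplex {V : Type*} [DecidableEq V] (G : Finset (Finset V)) : Prop :=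
  (∀ x ∈ G, x.Nonempty) ∧ (∀ x ∈ G, ∀ y : Finset V, y ⊆ x → y.Nonempty → y ∈ G)

/-- A subcomplex of `G` is a subset of `G` that is itself a simplicial complex. -/
def IsSubcomplex {V : Type*} [DecidableEq V] (G A : Finset (Finset V)) : Prop :=
  A ⊆ G ∧ IsSimplicialComplex A

/-- The closure of a simplex `x`: all nonempty subsets of `x`. -/
def simplexClosure {V : Type*} [DecidableEq V] (x : Finset V) : Finset (Finset V) :=
  x.powerset.filter (fun y => y.Nonempty)

/-- a valuation `X` (vanishing on the empty complex) on the subcomplexes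
of a simplicial complex `G` is determined by its values on simplex closures:
`X(A) = ∑_{x ∈ A} (X(x̄) − X(x̄ \ {x}))`. -/
theorem valuation_eq_sum_over_simplices
    {V : Type*} [DecidableEq V] (G : Finset (Finset V))
    (hG : IsSimplicialComplex G)
    (X : Finset (Finset V) → ℝ)
    (hX0 : X ∅ = 0)
    (hX : ∀ A B : Finset (Finset V), IsSubcomplex G A → IsSubcomplex G B →
      X (A ∪ B) + X (A ∩ B) = X A + X B)
    (A : Finset (Finset V)) (hA : IsSubcomplex G A) :
    X A = ∑ x ∈ A, (X (simplexClosure x) - X ((simplexClosure x).erase x)) := by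
  classical
  revert hA
  induction A using Finset.strongInduction with
  | _ A ih =>
    intro hA
    rcases A.eq_empty_or_nonempty with rfl | hAne
    · simpa using hX0
    · obtain ⟨x, hx, hxmax⟩ := A.exists_max_image Finset.card hAne
      have hxG : x ∈ G := hA.1 hx
      have hxne : x.Nonempty := hA.2.1 x hx
      -- closure of x is contained in A
      have hclA : simplexClosure x ⊆ A := by
        intro y hy
        simp only [simplexClosure, Finset.mem_filter, Finset.mem_powerset] at hy
        exact hA.2.2 x hx y hy.1 hy.2
      have hxcl : x ∈ simplexClosure x := by
        simp [simplexClosure, hxne]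
      -- union
      have hunion : A.erase x ∪ simplexClosure x = A := by
        apply Finset.ext
        intro a
        constructor
        · intro ha
          rcases Finset.mem_union.1 ha with h | h
          · exact Finset.mem_of_mem_erase h
          · exact hclA h
        · intro ha
          by_cases hax : a = x
          · exact Finset.mem_union_right _ (hax ▸ hxcl)
          · exact Finset.mem_union_left _ (Finset.mem_erase.2 ⟨hax, ha⟩)
      -- intersection
      have hinter : A.erase x ∩ simplexClosure x = (simplexClosure x).erase x := by
        apply Finset.ext
        intro a
        simp only [Finset.mem_inter, Finset.mem_erase]
        constructor
        · rintro ⟨⟨hax, _⟩, hcl⟩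
          exact ⟨hax, hcl⟩
        · rintro ⟨hax, hcl⟩
          exact ⟨⟨hax, hclA hcl⟩, hcl⟩
      -- A.erase x is a subcomplex
      have hEr : IsSubcomplex G (A.erase x) := by
        refine ⟨fun a ha => hA.1 (Finset.mem_of_mem_erase ha), fun a ha => hA.2.1 a (Finset.mem_of_mem_erase ha), ?_⟩
        intro a ha y hya hyne
        have haA := Finset.mem_of_mem_erase ha
        have hyA : y ∈ A := hA.2.2 a haA y hya hyne
        refine Finset.mem_erase.2 ⟨?_, hyA⟩
        rintro rfl
        have hax := (Finset.mem_erase.1 ha).1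
        have hcard : a.card ≤ y.card := hxmax a haA
        exact hax (Finset.eq_of_subset_of_card_le hya hcard).symm
      -- closure of x is a subcomplex
      have hCl : IsSubcomplex G (simplexClosure x) := by
        refine ⟨fun a ha => hclA ha |> hA.1, ?_, ?_⟩
        · intro a ha
          exact (Finset.mem_filter.1 ha).2
        · intro a ha y hya hyne
          simp only [simplexClosure, Finset.mem_filter, Finset.mem_powerset] at ha ⊢
          exact ⟨hya.trans ha.1, hyne⟩
      have hval := hX (A.erase x) (simplexClosure x) hEr hCl
      rw [hunion, hinter] at hval
      have hsub : A.erase x ⊂ A := Finset.erase_ssubset hx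
      have hihe := ih (A.erase x) hsub hEr
      have hsum : (∑ y ∈ A.erase x, (X (simplexClosure y) - X ((simplexClosure y).erase y)))
          + (X (simplexClosure x) - X ((simplexClosure x).erase x))
          = ∑ y ∈ A, (X (simplexClosure y) - X ((simplexClosure y).erase y)) :=
        Finset.sum_erase_add A _ hx
      linarith
end

section
/- Gauss–Bonnet for simplicial complexes: let G be a finite abstract simplicial complex, with vertex set V(G) = {v : {v} ∈ G}. Define the curvature of a vertex v by K(v) = Σ_{x ∈ G, v ∈ x} (−1)^(card(x)−1) / card(x) ∈ ℚ. Then Σ_{v ∈ V(G)} K(v) = χ(G), the Euler characteristic of G. -/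
/-- Gauss–Bonnet: the sum over all vertices of the curvature
`K(v) = ∑_{x ∈ G, v ∈ x} (−1)^(card x − 1) / card x` equals the Euler characteristic
`χ(G) = ∑_{x ∈ G} (−1)^(card x − 1)`. -/
theorem gauss_bonnet
    {V : Type*} [DecidableEq V] [Fintype V] (G : Finset (Finset V))
    (hG : IsSimplicialComplex G) :
    ∑ v ∈ Finset.univ.filter (fun v : V => {v} ∈ G),
        (∑ x ∈ G.filter (fun x => v ∈ x), ((-1 : ℚ) ^ (x.card - 1) / (x.card : ℚ)))
      = ∑ x ∈ G, (-1 : ℚ) ^ (x.card - 1) := by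
  rw [Finset.sum_comm' (t' := G) (s' := fun x => Finset.univ.filter (fun v : V => v ∈ x))
    (f := fun _ x => ((-1 : ℚ) ^ (x.card - 1) / (x.card : ℚ)))]
  · refine Finset.sum_congr rfl fun x hx => ?_
    rw [Finset.sum_const]
    have hc : (Finset.univ.filter (fun v : V => v ∈ x)).card = x.card := by
      congr 1
      ext v; simp
    rw [hc]
    have hne : (x.card : ℚ) ≠ 0 := by
      have := (hG.1 x hx).card_pos
      positivity
    rw [nsmul_eq_mul]
    field_simp
  · intro v x
    simp only [Finset.mem_filter, Finset.mem_univ, true_and]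
    constructor
    · rintro ⟨h1, h2, h3⟩; exact ⟨h3, h2⟩
    · rintro ⟨h1, h2⟩
      exact ⟨hG.2 x h2 {v} (Finset.singleton_subset_iff.mpr h1) (Finset.singleton_nonempty v), h2, h1⟩
end

section
/- Let G be a finite abstract simplicial complex and v a vertex of G. Let V_k(v) denote the number of k-dimensional simplices in the unit sphere of v, i.e. V_k(v) = card{y ∈ G : card(y) = k+1, v ∉ y, y ∪ {v} ∈ G}. Then the curvature K(v) = Σ_{x ∈ G, v ∈ x} (−1)^(card(x)−1) / card(x) satisfies K(v) = 1 − V_0(v)/2 + V_1(v)/3 − V_2(v)/4 + ⋯, i.e. K(v) = 1 + Σ_{k ≥ 0} (−1)^(k+1) V_k(v)/(k+2). -/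
/-- The number of `k`-dimensional simplices in the unit sphere (link) of a vertex `v`. -/
def sphereCount {V : Type*} [DecidableEq V] (G : Finset (Finset V)) (v : V) (k : ℕ) : ℕ :=
  (G.filter (fun y => y.card = k + 1 ∧ v ∉ y ∧ y ∪ {v} ∈ G)).card

/-- the curvature `K(v) = ∑_{x ∈ G, v ∈ x} (−1)^(card x − 1)/card x` of a
vertex equals `1 + ∑_{k ≥ 0} (−1)^(k+1) V_k(v)/(k+2)`, where `V_k(v)` counts the
`k`-simplices in the unit sphere of `v` (the sum is finite: it is truncated at the
maximal cardinality `d` of a simplex of `G`, beyond which `V_k(v) = 0`). -/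
theorem curvature_eq_sphere_sum
    {V : Type*} [DecidableEq V] (G : Finset (Finset V))
    (hG : IsSimplicialComplex G) (v : V) (hv : ({v} : Finset V) ∈ G) :
    ∑ x ∈ G.filter (fun x => v ∈ x), ((-1 : ℚ) ^ (x.card - 1) / (x.card : ℚ))
      = 1 + ∑ k ∈ Finset.range (G.sup Finset.card),
          (-1 : ℚ) ^ (k + 1) * (sphereCount G v k : ℚ) / ((k : ℚ) + 2) := by
  classical
  -- split off the simplex {v}
  have hsplit : G.filter (fun x => v ∈ x)
      = insert {v} (G.filter (fun x => v ∈ x ∧ x ≠ {v})) := by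
    ext x
    simp only [Finset.mem_insert, Finset.mem_filter]
    constructor
    · rintro ⟨hxG, hvx⟩
      by_cases h : x = {v}
      · exact Or.inl h
      · exact Or.inr ⟨hxG, hvx, h⟩
    · rintro (rfl | ⟨h1, h2, _⟩)
      · exact ⟨hv, Finset.mem_singleton_self v⟩
      · exact ⟨h1, h2⟩
  have hcard2 : ∀ x ∈ G.filter (fun x => v ∈ x ∧ x ≠ {v}), 2 ≤ x.card := by
    intro x hx
    simp only [Finset.mem_filter] at hx
    obtain ⟨hxG, hvx, hne⟩ := hx
    by_contra h
    push_neg at h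
    interval_cases hc : x.card
    · exact absurd (Finset.card_eq_zero.mp hc ▸ hvx) (by simp)
    · obtain ⟨a, rfl⟩ := Finset.card_eq_one.mp hc
      rw [Finset.mem_singleton] at hvx
      exact hne (by rw [hvx])
  rw [hsplit, Finset.sum_insert (by simp)]
  have h1 : ((-1:ℚ)^(({v}:Finset V).card - 1) / (({v}:Finset V).card : ℚ)) = 1 := by simp
  rw [h1]
  congr 1
  rw [← Finset.sum_fiberwise_of_maps_to (g := fun x : Finset V => x.card - 2)
      (t := Finset.range (G.sup Finset.card))
      (fun x hx => by
        simp only [Finset.mem_range]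
        have h2 := hcard2 x hx
        simp only [Finset.mem_filter] at hx
        have hle : x.card ≤ G.sup Finset.card := Finset.le_sup hx.1
        omega)]
  refine Finset.sum_congr rfl fun k hk => ?_
  have hfib : ∀ x ∈ (G.filter (fun x => v ∈ x ∧ x ≠ {v})).filter
      (fun x => x.card - 2 = k), x.card = k + 2 := by
    intro x hx
    rw [Finset.mem_filter] at hx
    have := hcard2 x hx.1
    omega
  have hc : ((G.filter (fun x => v ∈ x ∧ x ≠ {v})).filter
      (fun x => x.card - 2 = k)).card = sphereCount G v k := by
    apply Finset.card_bij (fun x _ => x.erase v)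
    · intro x hx
      have hcx := hfib x hx
      simp only [Finset.mem_filter] at hx ⊢
      obtain ⟨⟨hxG, hvx, hne⟩, _⟩ := hx
      have hins : insert v (x.erase v) = x := Finset.insert_erase hvx
      have hu : x.erase v ∪ {v} = x := by
        rw [Finset.union_comm, ← Finset.insert_eq, hins]
      refine ⟨?_, ?_, ?_, ?_⟩
      · exact hG.2 x hxG (x.erase v) (Finset.erase_subset v x)
          (Finset.card_pos.mp (by rw [Finset.card_erase_of_mem hvx, hcx]; omega))
      · rw [Finset.card_erase_of_mem hvx, hcx]; omega
      · exact Finset.notMem_erase v x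
      · rw [hu]; exact hxG
    · intro x₁ hx₁ x₂ hx₂ h
      simp only [Finset.mem_filter] at hx₁ hx₂
      have e1 : insert v (x₁.erase v) = x₁ := Finset.insert_erase hx₁.1.2.1
      have e2 : insert v (x₂.erase v) = x₂ := Finset.insert_erase hx₂.1.2.1
      rw [← e1, ← e2, h]
    · intro y hy
      simp only [Finset.mem_filter] at hy
      obtain ⟨hyG, hcy, hvy, hyu⟩ := hy
      have he : y ∪ {v} = insert v y := by
        rw [Finset.union_comm, ← Finset.insert_eq]
      refine ⟨y ∪ {v}, ?_, ?_⟩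
      · simp only [Finset.mem_filter]
        have hcyu : (y ∪ {v}).card = k + 2 := by
          rw [he, Finset.card_insert_of_notMem hvy, hcy]
        refine ⟨⟨hyu, ?_, ?_⟩, by omega⟩
        · rw [he]; exact Finset.mem_insert_self v y
        · intro h
          rw [h] at hcyu
          simp at hcyu
      · rw [he, Finset.erase_insert hvy]
  set fib := (G.filter (fun x => v ∈ x ∧ x ≠ {v})).filter
      (fun x => x.card - 2 = k) with hfibdef
  have hconst : ∑ x ∈ fib, ((-1 : ℚ) ^ (x.card - 1) / (x.card : ℚ))
      = ∑ _x ∈ fib, ((-1 : ℚ) ^ (k + 1) / ((k : ℚ) + 2)) := by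
    refine Finset.sum_congr rfl fun x hx => ?_
    rw [hfib x hx]
    push_cast
    norm_num
  rw [hconst, Finset.sum_const, hc, nsmul_eq_mul]
  ring
end

section
/- Poincaré–Hopf for simplicial complexes: let G be a finite abstract simplicial complex with vertex set V(G) = {v : {v} ∈ G}, and let f : V(G) → ℝ be injective. For a vertex v define S_f⁻(v) = {y ∈ G : v ∉ y, y ∪ {v} ∈ G, and f(w) < f(v) for all w ∈ y} and the index i_f(v) = 1 − χ(S_f⁻(v)), where χ(S) = Σ_{y ∈ S} (−1)^(card(y)−1). Then χ(G) = Σ_{v ∈ V(G)} i_f(v). -/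
/-- Euler characteristic of a finite set of nonempty finite sets. -/
def eulerChar {V : Type*} (S : Finset (Finset V)) : ℤ :=
  ∑ x ∈ S, (-1 : ℤ) ^ (x.card - 1)

/-- The vertex of a finset at which `f` is maximal (junk otherwise). -/
noncomputable def maxVert {V : Type*} [Nonempty V] (f : V → ℝ) (x : Finset V) : V :=
  if h : x.Nonempty then (Finset.exists_max_image x f h).choose else Classical.arbitrary V

lemma maxVert_mem {V : Type*} [Nonempty V] (f : V → ℝ) {x : Finset V} (h : x.Nonempty) :
    maxVert f x ∈ x := by
  rw [maxVert, dif_pos h]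
  exact (Finset.exists_max_image x f h).choose_spec.1

lemma maxVert_le {V : Type*} [Nonempty V] (f : V → ℝ) {x : Finset V} (h : x.Nonempty) :
    ∀ w ∈ x, f w ≤ f (maxVert f x) := by
  rw [maxVert, dif_pos h]
  exact (Finset.exists_max_image x f h).choose_spec.2

/-- Poincaré–Hopf: for an injective function `f` on the vertex set of a
finite abstract simplicial complex `G`, the Euler characteristic of `G` is the sum of
the indices `i_f(v) = 1 − χ(S_f⁻(v))` over all vertices, where `S_f⁻(v)` consists of
the simplices `y` of the link of `v` all of whose vertices have `f`-value below `f(v)`. -/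
theorem poincare_hopf
    {V : Type*} [DecidableEq V] [Fintype V] (G : Finset (Finset V))
    (hG : IsSimplicialComplex G)
    (f : V → ℝ) (hf : Set.InjOn f {v : V | ({v} : Finset V) ∈ G}) :
    eulerChar G
      = ∑ v ∈ Finset.univ.filter (fun v : V => {v} ∈ G),
          (1 - eulerChar (G.filter
            (fun y => v ∉ y ∧ y ∪ {v} ∈ G ∧ ∀ w ∈ y, f w < f v))) := by
  rcases isEmpty_or_nonempty V with hV | hV
  · have hGe : G = ∅ := by
      rw [Finset.eq_empty_iff_forall_notMem]
      intro x hx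
      exact (hG.1 x hx).elim (fun v _ => hV.elim v)
    simp [hGe, eulerChar]
  -- every element of a simplex is a vertex
  have hvert : ∀ x ∈ G, ∀ w ∈ x, ({w} : Finset V) ∈ G := by
    intro x hx w hw
    exact hG.2 x hx {w} (Finset.singleton_subset_iff.2 hw) (Finset.singleton_nonempty w)
  have hmap : ∀ x ∈ G, maxVert f x ∈ Finset.univ.filter (fun v : V => {v} ∈ G) := by
    intro x hx
    simp only [Finset.mem_filter, Finset.mem_univ, true_and]
    exact hvert x hx _ (maxVert_mem f (hG.1 x hx))
  rw [eulerChar, ← Finset.sum_fiberwise_of_maps_to hmap (fun x => (-1 : ℤ) ^ (x.card - 1))]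
  refine Finset.sum_congr rfl ?_
  intro v hv
  have hvG : ({v} : Finset V) ∈ G := by
    simpa using (Finset.mem_filter.1 hv).2
  -- characterize the fiber
  have hfib : G.filter (fun x => maxVert f x = v)
      = G.filter (fun x => v ∈ x ∧ ∀ w ∈ x, f w ≤ f v) := by
    apply Finset.filter_congr
    intro x hx
    have hne := hG.1 x hx
    constructor
    · rintro rfl
      exact ⟨maxVert_mem f hne, maxVert_le f hne⟩
    · rintro ⟨hvx, hle⟩
      have h1 : f (maxVert f x) ≤ f v := hle _ (maxVert_mem f hne)
      have h2 : f v ≤ f (maxVert f x) := maxVert_le f hne v hvx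
      exact hf (hvert x hx _ (maxVert_mem f hne)) hvG (le_antisymm h1 h2)
  rw [hfib]
  set F := G.filter (fun x => v ∈ x ∧ ∀ w ∈ x, f w ≤ f v) with hF
  set S := G.filter (fun y => v ∉ y ∧ y ∪ {v} ∈ G ∧ ∀ w ∈ y, f w < f v) with hS
  have hvF : ({v} : Finset V) ∈ F := by
    simp only [hF, Finset.mem_filter]
    exact ⟨hvG, Finset.mem_singleton_self v, by simp⟩
  rw [← Finset.add_sum_erase F _ hvF]
  have hbij : ∑ x ∈ F.erase {v}, (-1 : ℤ) ^ (x.card - 1)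
      = ∑ y ∈ S, -(-1 : ℤ) ^ (y.card - 1) := by
    refine Finset.sum_nbij' (fun x => x.erase v) (fun y => insert v y) ?_ ?_ ?_ ?_ ?_
    · intro x hx
      obtain ⟨hxne, hxG, hvx, hle⟩ : x ≠ {v} ∧ x ∈ G ∧ v ∈ x ∧ ∀ w ∈ x, f w ≤ f v := by
        have h1 := Finset.mem_erase.1 hx
        have h2 := Finset.mem_filter.1 h1.2
        exact ⟨h1.1, h2.1, h2.2.1, h2.2.2⟩
      have hyne : (x.erase v).Nonempty := by
        rw [Finset.erase_nonempty hvx]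
        exact (Finset.nontrivial_iff_ne_singleton hvx).2 hxne
      have hyG : x.erase v ∈ G := hG.2 x hxG _ (Finset.erase_subset v x) hyne
      have hxy : x.erase v ∪ {v} = x := by
        rw [Finset.union_comm, ← Finset.insert_eq, Finset.insert_erase hvx]
      refine Finset.mem_filter.2 ⟨hyG, Finset.notMem_erase v x, by rw [hxy]; exact hxG, ?_⟩
      intro w hw
      have hwx := Finset.mem_of_mem_erase hw
      have hwv : w ≠ v := Finset.ne_of_mem_erase hw
      exact lt_of_le_of_ne (hle w hwx) fun h =>
        hwv (hf (hvert x hxG w hwx) hvG h)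
    · intro y hy
      obtain ⟨hyG, hvy, hyuG, hlt⟩ : y ∈ G ∧ v ∉ y ∧ y ∪ {v} ∈ G ∧ ∀ w ∈ y, f w < f v := by
        have h := Finset.mem_filter.1 hy
        exact ⟨h.1, h.2.1, h.2.2.1, h.2.2.2⟩
      have hins : insert v y ∈ G := by rwa [Finset.union_comm, ← Finset.insert_eq] at hyuG
      refine Finset.mem_erase.2 ⟨?_, Finset.mem_filter.2 ⟨hins, Finset.mem_insert_self v y, ?_⟩⟩
      · intro h
        obtain ⟨w, hw⟩ := hG.1 y hyG
        have : w ∈ ({v} : Finset V) := h ▸ Finset.mem_insert_of_mem hw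
        rw [Finset.mem_singleton] at this
        exact hvy (this ▸ hw)
      · intro w hw
        rcases Finset.mem_insert.1 hw with rfl | hw
        · exact le_refl _
        · exact (hlt w hw).le
    · intro x hx
      have hvx : v ∈ x := (Finset.mem_filter.1 (Finset.mem_erase.1 hx).2).2.1
      exact Finset.insert_erase hvx
    · intro y hy
      have hvy : v ∉ y := (Finset.mem_filter.1 hy).2.1
      exact Finset.erase_insert hvy
    · intro x hx
      have hvx : v ∈ x := (Finset.mem_filter.1 (Finset.mem_erase.1 hx).2).2.1
      have hyne : 1 ≤ (x.erase v).card := by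
        have hxne : x ≠ {v} := (Finset.mem_erase.1 hx).1
        rcases Finset.eq_empty_or_nonempty (x.erase v) with h | h
        · exfalso
          apply hxne
          rw [Finset.erase_eq_empty_iff] at h
          rcases h with h | h
          · exact absurd hvx (h ▸ Finset.notMem_empty v)
          · exact h
        · exact Finset.card_pos.2 h
      have h1 : 1 ≤ x.card := Finset.card_pos.2 ⟨v, hvx⟩
      have hcard : x.card = (x.erase v).card + 1 := by
        rw [Finset.card_erase_of_mem hvx]
        omega
      rw [hcard]
      rw [show (x.erase v).card + 1 - 1 = ((x.erase v).card - 1) + 1 by omega]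
      ring
  rw [hbij, eulerChar, Finset.sum_neg_distrib]
  simp [eulerChar]
  ring
end

section
/- Index expectation: let G be a finite abstract simplicial complex with vertex set V(G) of cardinality n. For an injective function f : V(G) → ℝ and a vertex v, let i_f(v) = Σ_{x ∈ G : v ∈ x and f(w) ≤ f(v) for all w ∈ x} (−1)^(card(x)−1). Then the average of i_f(v) over all bijections f : V(G) → {1, …, n} (equivalently, over all n! linear orders on V(G)) equals the curvature K(v) = Σ_{x ∈ G, v ∈ x} (−1)^(card(x)−1) / card(x). -/
/-- The vertex set of a complex `G`: the elements `v` with `{v} ∈ G`. -/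
def vertexSet {V : Type*} [DecidableEq V] [Fintype V] (G : Finset (Finset V)) : Finset V :=
  Finset.univ.filter (fun v => ({v} : Finset V) ∈ G)

/-- The function `V → ℕ` induced by a bijection `σ` from the vertex set onto `Fin n`
(i.e. a labelling of the vertices by `{1, …, n}`); non-vertices get the value `0`. -/
def orderFun {V : Type*} [DecidableEq V] [Fintype V] (G : Finset (Finset V)) (n : ℕ)
    (σ : {v // v ∈ vertexSet G} ≃ Fin n) (w : V) : ℕ :=
  if h : w ∈ vertexSet G then (σ ⟨w, h⟩ : ℕ) + 1 else 0

/-- The Poincaré–Hopf index of `f` at `v`: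
`i_f(v) = ∑_{x ∈ G, v ∈ x, f(w) ≤ f(v) ∀ w ∈ x} (−1)^(card x − 1)`. -/
def indexAt {V : Type*} [DecidableEq V] (G : Finset (Finset V)) (f : V → ℕ) (v : V) : ℤ :=
  ∑ x ∈ G.filter (fun x => v ∈ x ∧ ∀ w ∈ x, f w ≤ f v), (-1 : ℤ) ^ (x.card - 1)

set_option maxHeartbeats 1000000

private lemma maxcount {α : Type*} [DecidableEq α] [Fintype α] {n : ℕ}
    (S : Finset α) (v : α) (hv : v ∈ S) :
    ((Finset.univ.filter (fun σ : α ≃ Fin n => ∀ w ∈ S, σ w ≤ σ v)).card) * S.card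
      = Fintype.card (α ≃ Fin n) := by
  classical
  set A : α → Finset (α ≃ Fin n) :=
    fun u => Finset.univ.filter (fun σ => ∀ w ∈ S, σ w ≤ σ u) with hA
  have hmemA : ∀ u (σ : α ≃ Fin n), σ ∈ A u ↔ ∀ w ∈ S, σ w ≤ σ u := by
    intro u σ
    rw [hA]
    simp only [Finset.mem_filter, Finset.mem_univ, true_and]
  have hstep : ∀ a ∈ S, ∀ b ∈ S, ∀ σ ∈ A a, (Equiv.swap a b).trans σ ∈ A b := by
    intro a ha b hb σ hσ
    rw [hmemA] at hσ ⊢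
    intro w hw
    have hmem : (Equiv.swap a b) w ∈ S := by
      rcases eq_or_ne w a with rfl | h1
      · simpa using hb
      rcases eq_or_ne w b with rfl | h2
      · simpa using ha
      · rwa [Equiv.swap_apply_of_ne_of_ne h1 h2]
    have := hσ _ hmem
    simpa using this
  have hcard : ∀ u ∈ S, (A u).card = (A v).card := by
    intro u hu
    apply Finset.card_bij' (fun σ _ => (Equiv.swap u v).trans σ)
      (fun σ _ => (Equiv.swap u v).trans σ)
    · exact hstep u hu v hv
    · intro σ hσ
      rw [Equiv.swap_comm]
      exact hstep v hv u hu σ hσ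
    · intro σ _; ext w; simp
    · intro σ _; ext w; simp
  have hdisj : ∀ a ∈ S, ∀ b ∈ S, a ≠ b → Disjoint (A a) (A b) := by
    intro a ha b hb hab
    rw [Finset.disjoint_left]
    intro σ hσa hσb
    rw [hmemA] at hσa hσb
    exact hab (σ.injective (le_antisymm (hσb a ha) (hσa b hb)))
  have hcover : S.biUnion A = Finset.univ := by
    ext σ
    simp only [Finset.mem_biUnion, Finset.mem_univ, iff_true]
    obtain ⟨b, hb, hbmax⟩ := S.exists_max_image (fun w => σ w) ⟨v, hv⟩
    exact ⟨b, hb, (hmemA b σ).2 hbmax⟩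
  have hsum : ∑ u ∈ S, (A u).card = Fintype.card (α ≃ Fin n) := by
    rw [← Finset.card_biUnion hdisj, hcover, Finset.card_univ]
  calc (A v).card * S.card = ∑ _u ∈ S, (A v).card := by
        rw [Finset.sum_const, smul_eq_mul, mul_comm]
    _ = ∑ u ∈ S, (A u).card := (Finset.sum_congr rfl hcard).symm
    _ = Fintype.card (α ≃ Fin n) := hsum

/-- index expectation: the average of the index `i_f(v)` over all `n!`
bijections `f` from the vertex set to `{1, …, n}` equals the curvature
`K(v) = ∑_{x ∈ G, v ∈ x} (−1)^(card x − 1)/card x`. -/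
theorem index_expectation
    {V : Type*} [DecidableEq V] [Fintype V] (G : Finset (Finset V))
    (hG : IsSimplicialComplex G)
    (n : ℕ) (hn : n = (vertexSet G).card)
    (v : V) (hv : ({v} : Finset V) ∈ G) :
    (∑ σ : {v // v ∈ vertexSet G} ≃ Fin n, (indexAt G (orderFun G n σ) v : ℚ))
        / (n.factorial : ℚ)
      = ∑ x ∈ G.filter (fun x => v ∈ x), (-1 : ℚ) ^ (x.card - 1) / (x.card : ℚ) := by
  classical
  have hvK : v ∈ vertexSet G := by simp [vertexSet, hv]
  set K := vertexSet G with hK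
  have hcardK : Fintype.card {v // v ∈ K} = n := by
    rw [Fintype.card_coe, hn]
  have hfact : Fintype.card ({v // v ∈ K} ≃ Fin n) = n.factorial := by
    rw [Fintype.card_equiv (Fintype.equivFinOfCardEq hcardK), hcardK]
  -- vertices of a simplex are in K
  have hsub : ∀ x ∈ G, ∀ w ∈ x, w ∈ K := by
    intro x hx w hw
    have : ({w} : Finset V) ∈ G :=
      hG.2 x hx {w} (Finset.singleton_subset_iff.2 hw) (Finset.singleton_nonempty w)
    simp [hK, vertexSet, this]
  -- key count for each simplex containing v
  have key : ∀ x ∈ G.filter (fun x => v ∈ x),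
      ((Finset.univ.filter (fun σ : {v // v ∈ K} ≃ Fin n =>
          ∀ w ∈ x, orderFun G n σ w ≤ orderFun G n σ v)).card : ℚ) * (x.card : ℚ)
        = (n.factorial : ℚ) := by
    intro x hx
    rw [Finset.mem_filter] at hx
    obtain ⟨hxG, hvx⟩ := hx
    set Sx : Finset {v // v ∈ K} :=
      x.attach.map ⟨fun w => ⟨w.1, hsub x hxG w.1 w.2⟩,
        fun a b hab => Subtype.ext (by have h := congrArg Subtype.val hab; exact h)⟩ with hSx
    have hmemSx : ∀ u : {v // v ∈ K}, u ∈ Sx ↔ (u : V) ∈ x := by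
      intro u
      simp only [hSx, Finset.mem_map, Finset.mem_attach, Function.Embedding.coeFn_mk,
        true_and, Subtype.exists]
      constructor
      · rintro ⟨a, ha, rfl⟩; exact ha
      · intro h; exact ⟨u.1, h, Subtype.ext rfl⟩
    have hvSx : (⟨v, hvK⟩ : {v // v ∈ K}) ∈ Sx := (hmemSx _).2 hvx
    have hcardSx : Sx.card = x.card := by
      rw [hSx, Finset.card_map, Finset.card_attach]
    have hcond : ∀ σ : {v // v ∈ K} ≃ Fin n,
        (∀ w ∈ x, orderFun G n σ w ≤ orderFun G n σ v) ↔
        (∀ u ∈ Sx, σ u ≤ σ ⟨v, hvK⟩) := by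
      intro σ
      constructor
      · intro h u hu
        have hux := (hmemSx u).1 hu
        have := h u hux
        rw [orderFun, orderFun, dif_pos (hsub x hxG u hux), dif_pos hvK] at this
        exact Fin.le_def.mpr (Nat.le_of_succ_le_succ this)
      · intro h w hw
        have hwK := hsub x hxG w hw
        have := h ⟨w, hwK⟩ ((hmemSx _).2 hw)
        rw [orderFun, orderFun, dif_pos hwK, dif_pos hvK]
        exact Nat.succ_le_succ (Fin.le_def.mp this)
    have := maxcount (n := n) Sx ⟨v, hvK⟩ hvSx
    rw [hcardSx, hfact] at this
    calc ((Finset.univ.filter (fun σ : {v // v ∈ K} ≃ Fin n =>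
          ∀ w ∈ x, orderFun G n σ w ≤ orderFun G n σ v)).card : ℚ) * (x.card : ℚ)
        = (((Finset.univ.filter (fun σ : {v // v ∈ K} ≃ Fin n =>
          ∀ u ∈ Sx, σ u ≤ σ ⟨v, hvK⟩)).card : ℚ)) * (x.card : ℚ) := by
          rw [Finset.filter_congr (fun σ _ => hcond σ)]
      _ = (n.factorial : ℚ) := by exact_mod_cast congrArg (Nat.cast : ℕ → ℚ) this
  -- rewrite the numerator
  have hnum : (∑ σ : {v // v ∈ K} ≃ Fin n, (indexAt G (orderFun G n σ) v : ℚ))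
      = ∑ x ∈ G.filter (fun x => v ∈ x),
          ((Finset.univ.filter (fun σ : {v // v ∈ K} ≃ Fin n =>
            ∀ w ∈ x, orderFun G n σ w ≤ orderFun G n σ v)).card : ℚ)
            * (-1 : ℚ) ^ (x.card - 1) := by
    have hfilt : ∀ f : V → ℕ,
        G.filter (fun x => v ∈ x ∧ ∀ w ∈ x, f w ≤ f v)
          = (G.filter (fun x => v ∈ x)).filter (fun x => ∀ w ∈ x, f w ≤ f v) := by
      intro f
      rw [Finset.filter_filter]
    calc (∑ σ : {v // v ∈ K} ≃ Fin n, (indexAt G (orderFun G n σ) v : ℚ))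
        = ∑ σ : {v // v ∈ K} ≃ Fin n, ∑ x ∈ G.filter (fun x => v ∈ x),
            (if ∀ w ∈ x, orderFun G n σ w ≤ orderFun G n σ v
              then (-1 : ℚ) ^ (x.card - 1) else 0) := by
          apply Finset.sum_congr rfl
          intro σ _
          rw [indexAt]
          conv_rhs => rw [← Finset.sum_filter, Finset.filter_filter]
          push_cast
          congr!
      _ = ∑ x ∈ G.filter (fun x => v ∈ x), ∑ σ : {v // v ∈ K} ≃ Fin n,
            (if ∀ w ∈ x, orderFun G n σ w ≤ orderFun G n σ v
              then (-1 : ℚ) ^ (x.card - 1) else 0) := Finset.sum_comm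
      _ = _ := by
          apply Finset.sum_congr rfl
          intro x _
          rw [← Finset.sum_filter, Finset.sum_const, nsmul_eq_mul]
  rw [hnum, Finset.sum_div]
  apply Finset.sum_congr rfl
  intro x hx
  have hxcard : (x.card : ℚ) ≠ 0 := by
    have : x.Nonempty := hG.1 x (Finset.mem_filter.1 hx).1
    exact_mod_cast Finset.card_ne_zero_of_mem this.choose_spec
  have hfac : (n.factorial : ℚ) ≠ 0 := by exact_mod_cast n.factorial_ne_zero
  have hk := key x hx
  field_simp
  linear_combination hk
end

section
/- Barycentric refinement of the f-vector: let G be a finite abstract simplicial complex and let its Barycentric refinement G₁ be the set of nonempty finite subsets c ⊆ G that are chains, i.e. for all a, b ∈ c, a ⊆ b or b ⊆ a. Let v_j(G) be the number of simplices of G of cardinality j+1 and v_k(G₁) the number of chains of cardinality k+1. Then v_k(G₁) = Σ_j s(j+1, k+1) · v_j(G), where s(m, r) is the number of surjective functions from a set of m elements onto a set of r elements. -/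
/-- The Barycentric refinement of `G`: all nonempty finite subsets of `G` that are
chains under inclusion. -/
def barycentric {V : Type*} [DecidableEq V] (G : Finset (Finset V)) :
    Finset (Finset (Finset V)) :=
  G.powerset.filter (fun c => c.Nonempty ∧ ∀ a ∈ c, ∀ b ∈ c, a ⊆ b ∨ b ⊆ a)

/-- The number of surjective functions from a set of `m` elements onto a set of `r`
elements. -/
def surjCount (m r : ℕ) : ℕ :=
  (Finset.univ.filter (fun f : Fin m → Fin r => Function.Surjective f)).card


open Finset

namespace BaryAux

variable {V : Type*} [DecidableEq V]

/-- count of chain elements not containing `v` -/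
def gcnt (c : Finset (Finset V)) (v : V) : ℕ := (c.filter (fun y => v ∉ y)).card

def topChains (x : Finset V) (n : ℕ) : Finset (Finset (Finset V)) :=
  x.powerset.powerset.filter
    (fun c => (∀ y ∈ c, y.Nonempty) ∧ (∀ a ∈ c, ∀ b ∈ c, a ⊆ b ∨ b ⊆ a) ∧ x ∈ c ∧ c.card = n)

lemma mem_topChains {x : Finset V} {n : ℕ} {c : Finset (Finset V)} :
    c ∈ topChains x n ↔
      (∀ y ∈ c, y ⊆ x) ∧ (∀ y ∈ c, y.Nonempty) ∧
        (∀ a ∈ c, ∀ b ∈ c, a ⊆ b ∨ b ⊆ a) ∧ x ∈ c ∧ c.card = n := by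
  simp only [topChains, mem_filter, mem_powerset]
  constructor
  · rintro ⟨h0, h1, h2, h3, h4⟩
    exact ⟨fun y hy => mem_powerset.1 (h0 hy), h1, h2, h3, h4⟩
  · rintro ⟨h0, h1, h2, h3, h4⟩
    exact ⟨fun y hy => mem_powerset.2 (h0 y hy), h1, h2, h3, h4⟩

lemma gcnt_le {x : Finset V} {k : ℕ} {c : Finset (Finset V)} (hc : c ∈ topChains x (k+1))
    {v : V} (hv : v ∈ x) : gcnt c v ≤ k := by
  obtain ⟨-, -, -, hx, hcard⟩ := mem_topChains.1 hc
  have h : c.filter (fun y => v ∉ y) ⊆ c.erase x := by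
    intro y hy
    rw [mem_filter] at hy
    exact mem_erase.2 ⟨fun h => hy.2 (h ▸ hv), hy.1⟩
  calc gcnt c v ≤ (c.erase x).card := card_le_card h
    _ = k := by rw [card_erase_of_mem hx, hcard]; rfl

lemma idx_le {x : Finset V} {k : ℕ} {c : Finset (Finset V)} (hc : c ∈ topChains x (k+1))
    {y : Finset V} (hy : y ∈ c) : (c.filter (fun z => z ⊂ y)).card ≤ k := by
  obtain ⟨-, -, -, -, hcard⟩ := mem_topChains.1 hc
  have h : c.filter (fun z => z ⊂ y) ⊆ c.erase y := by
    intro z hz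
    rw [mem_filter] at hz
    exact mem_erase.2 ⟨hz.2.ne, hz.1⟩
  calc (c.filter (fun z => z ⊂ y)).card ≤ (c.erase y).card := card_le_card h
    _ = k := by rw [card_erase_of_mem hy, hcard]; rfl

lemma elem_eq {x : Finset V} {k : ℕ} {c : Finset (Finset V)} (hc : c ∈ topChains x (k+1))
    {y : Finset V} (hy : y ∈ c) :
    y = x.filter (fun v => gcnt c v ≤ (c.filter (fun z => z ⊂ y)).card) := by
  obtain ⟨hsub, hne, hch, hx, hcard⟩ := mem_topChains.1 hc
  ext v
  simp only [mem_filter]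
  constructor
  · intro hv
    refine ⟨hsub y hy hv, ?_⟩
    apply card_le_card
    intro z hz
    rw [mem_filter] at hz ⊢
    refine ⟨hz.1, ?_⟩
    rcases hch z hz.1 y hy with h | h
    · exact h.ssubset_of_ne (fun e => hz.2 (e ▸ hv))
    · exact absurd (h hv) hz.2
  · rintro ⟨hvx, hle⟩
    by_contra hv
    have hins : insert y (c.filter (fun z => z ⊂ y)) ⊆ c.filter (fun z => v ∉ z) := by
      intro z hz
      rcases mem_insert.1 hz with rfl | hz
      · exact mem_filter.2 ⟨hy, hv⟩
      · rw [mem_filter] at hz ⊢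
        exact ⟨hz.1, fun hvz => hv (hz.2.subset hvz)⟩
    have hc2 : (c.filter (fun z => z ⊂ y)).card + 1 ≤ gcnt c v := by
      have hnm : y ∉ c.filter (fun z => z ⊂ y) := fun h => (ssubset_irrefl y) (mem_filter.1 h).2
      rw [← card_insert_of_notMem hnm]
      exact card_le_card hins
    omega

lemma chain_eq_image {x : Finset V} {k : ℕ} {c : Finset (Finset V)}
    (hc : c ∈ topChains x (k+1)) :
    c = (range (k+1)).image (fun i => x.filter (fun v => gcnt c v ≤ i)) := by
  apply eq_of_subset_of_card_le
  · intro y hy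
    rw [mem_image]
    exact ⟨(c.filter (fun z => z ⊂ y)).card, mem_range.2 (Nat.lt_succ_of_le (idx_le hc hy)),
      (elem_eq hc hy).symm⟩
  · calc ((range (k+1)).image (fun i => x.filter (fun v => gcnt c v ≤ i))).card
        ≤ (range (k+1)).card := card_image_le
      _ = k + 1 := card_range _
      _ = c.card := (mem_topChains.1 hc).2.2.2.2.symm

lemma levels_injOn {x : Finset V} {k : ℕ} {c : Finset (Finset V)}
    (hc : c ∈ topChains x (k+1)) :
    Set.InjOn (fun i => x.filter (fun v => gcnt c v ≤ i)) (range (k+1)) := by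
  apply injOn_of_card_image_eq
  rw [← chain_eq_image hc, (mem_topChains.1 hc).2.2.2.2, card_range]

lemma gcnt_surj {x : Finset V} {k : ℕ} {c : Finset (Finset V)}
    (hc : c ∈ topChains x (k+1)) {i : ℕ} (hi : i < k+1) :
    ∃ v ∈ x, gcnt c v = i := by
  have hmem : (range (k+1)).image (fun i => x.filter (fun v => gcnt c v ≤ i)) ⊆ c := by
    rw [← chain_eq_image hc]
  cases i with
  | zero =>
    have h0 : x.filter (fun v => gcnt c v ≤ 0) ∈ c :=
      hmem (mem_image_of_mem _ (mem_range.2 hi))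
    obtain ⟨v, hv⟩ := (mem_topChains.1 hc).2.1 _ h0
    rw [mem_filter] at hv
    exact ⟨v, hv.1, Nat.le_zero.1 hv.2⟩
  | succ j =>
    have hne : x.filter (fun v => gcnt c v ≤ j) ≠ x.filter (fun v => gcnt c v ≤ j+1) := by
      intro h
      have := levels_injOn hc (mem_range.2 (by omega)) (mem_range.2 hi) h
      omega
    have hss : x.filter (fun v => gcnt c v ≤ j) ⊂ x.filter (fun v => gcnt c v ≤ j+1) :=
      (monotone_filter_right x (fun v _ hv => hv.trans (by omega))).ssubset_of_ne hne
    obtain ⟨v, hv1, hv2⟩ := exists_of_ssubset hss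
    rw [mem_filter] at hv1
    refine ⟨v, hv1.1, ?_⟩
    have : ¬ gcnt c v ≤ j := fun h => hv2 (mem_filter.2 ⟨hv1.1, h⟩)
    omega

end BaryAux

namespace BaryAux

variable {V : Type*} [DecidableEq V]

lemma mem_elemOf {x : Finset V} {n : ℕ} {f : {a // a ∈ x} → Fin n} {i : ℕ} {u : V} :
    u ∈ (x.attach.filter (fun v => (f v : ℕ) ≤ i)).image Subtype.val ↔
      ∃ h : u ∈ x, (f ⟨u, h⟩ : ℕ) ≤ i := by
  constructor
  · intro h
    obtain ⟨⟨a, ha⟩, h1, rfl⟩ := mem_image.1 h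
    exact ⟨ha, (mem_filter.1 h1).2⟩
  · rintro ⟨h, hle⟩
    exact mem_image.2 ⟨⟨u, h⟩, mem_filter.2 ⟨mem_attach _ _, hle⟩, rfl⟩

lemma elemOf_injOn {x : Finset V} {k : ℕ} {f : {a // a ∈ x} → Fin (k+1)}
    (hf : Function.Surjective f) :
    Set.InjOn (fun i => (x.attach.filter (fun v => (f v : ℕ) ≤ i)).image Subtype.val)
      (range (k+1)) := by
  have key : ∀ i j : ℕ, j < k+1 → i < j →
      (x.attach.filter (fun v => (f v : ℕ) ≤ i)).image Subtype.val ≠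
      (x.attach.filter (fun v => (f v : ℕ) ≤ j)).image Subtype.val := by
    intro i j hj hij heq
    obtain ⟨v, hv⟩ := hf ⟨j, hj⟩
    have h1 : (v : V) ∈ (x.attach.filter (fun v => (f v : ℕ) ≤ j)).image Subtype.val :=
      mem_elemOf.2 ⟨v.2, by rw [Subtype.coe_eta, hv]⟩
    rw [← heq] at h1
    obtain ⟨h, hle⟩ := mem_elemOf.1 h1
    rw [Subtype.coe_eta, hv] at hle
    exact absurd hle (by simpa using hij.not_ge)
  intro i hi j hj heq
  rcases lt_trichotomy i j with h | h | h
  · exact absurd heq (key i j (mem_range.1 hj) h)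
  · exact h
  · exact absurd heq.symm (key j i (mem_range.1 hi) h)

lemma topChains_card (x : Finset V) (k : ℕ) :
    (topChains x (k+1)).card
      = (Finset.univ.filter
          (fun f : {a // a ∈ x} → Fin (k+1) => Function.Surjective f)).card := by
  refine Finset.card_bij'
    (fun c hc => fun v : {a // a ∈ x} =>
      (⟨gcnt c v.1, Nat.lt_succ_of_le (gcnt_le hc v.2)⟩ : Fin (k+1)))
    (fun f _ => (range (k+1)).image
        (fun i => (x.attach.filter (fun v => (f v : ℕ) ≤ i)).image Subtype.val))
    ?hi ?hj ?left ?right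
  case hi =>
    intro c hc
    rw [mem_filter]
    refine ⟨mem_univ _, fun b => ?_⟩
    obtain ⟨v, hv, hg⟩ := gcnt_surj hc b.isLt
    exact ⟨⟨v, hv⟩, Fin.ext hg⟩
  case hj =>
    intro f hf
    have hfs : Function.Surjective f := (mem_filter.1 hf).2
    rw [mem_topChains]
    refine ⟨?_, ?_, ?_, ?_, ?_⟩
    · intro y hy u hu
      obtain ⟨i, hi, rfl⟩ := mem_image.1 hy
      obtain ⟨h, -⟩ := mem_elemOf.1 hu
      exact h
    · intro y hy
      obtain ⟨i, hi, rfl⟩ := mem_image.1 hy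
      obtain ⟨v0, hv0⟩ := hfs ⟨0, Nat.succ_pos k⟩
      exact ⟨v0.1, mem_elemOf.2 ⟨v0.2, by rw [Subtype.coe_eta, hv0]; exact Nat.zero_le i⟩⟩
    · intro a ha b hb
      obtain ⟨i, hi, rfl⟩ := mem_image.1 ha
      obtain ⟨j, hj, rfl⟩ := mem_image.1 hb
      rcases le_total i j with h | h
      · exact Or.inl (image_subset_image (monotone_filter_right _ (fun v _ hv => hv.trans h)))
      · exact Or.inr (image_subset_image (monotone_filter_right _ (fun v _ hv => hv.trans h)))
    · refine mem_image.2 ⟨k, mem_range.2 (Nat.lt_succ_self k), ?_⟩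
      have h : x.attach.filter (fun v => (f v : ℕ) ≤ k) = x.attach := by
        apply filter_true_of_mem
        intro v _
        exact Nat.lt_succ_iff.1 (f v).isLt
      rw [h, attach_image_val]
    · rw [card_image_of_injOn (elemOf_injOn hfs), card_range]
  case left =>
    intro c hc
    have hkey : ∀ i : ℕ, i ∈ (range (k+1) : Finset ℕ) →
        (x.attach.filter (fun v =>
          (((⟨gcnt c v.1, Nat.lt_succ_of_le (gcnt_le hc v.2)⟩ : Fin (k+1))) : ℕ) ≤ i)).image
            Subtype.val
          = x.filter (fun u => gcnt c u ≤ i) := by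
      intro i _
      ext u
      constructor
      · intro h
        obtain ⟨⟨a, ha⟩, h1, rfl⟩ := mem_image.1 h
        exact mem_filter.2 ⟨ha, (mem_filter.1 h1).2⟩
      · intro h
        rw [mem_filter] at h
        exact mem_image.2 ⟨⟨u, h.1⟩, mem_filter.2 ⟨mem_attach _ _, h.2⟩, rfl⟩
    beta_reduce
    rw [Finset.image_congr hkey, ← chain_eq_image hc]
  case right =>
    intro f hf
    have hfs : Function.Surjective f := (mem_filter.1 hf).2
    funext v
    apply Fin.ext
    show gcnt ((range (k+1)).image
        (fun i => (x.attach.filter (fun w => (f w : ℕ) ≤ i)).image Subtype.val)) v.1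
      = (f v : ℕ)
    unfold gcnt
    rw [filter_image,
      card_image_of_injOn ((elemOf_injOn hfs).mono (coe_subset.2 (filter_subset _ _)))]
    have hpred : (range (k+1)).filter
        (fun i => v.1 ∉ (x.attach.filter (fun w => (f w : ℕ) ≤ i)).image Subtype.val)
        = (range (k+1)).filter (fun i => i < (f v : ℕ)) := by
      apply filter_congr
      intro i _
      constructor
      · intro h
        by_contra hlt
        exact h (mem_elemOf.2 ⟨v.2, by rw [Subtype.coe_eta]; omega⟩)
      · intro hlt hm
        obtain ⟨hh, hle⟩ := mem_elemOf.1 hm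
        rw [Subtype.coe_eta] at hle
        omega
    rw [hpred]
    have h2 : (range (k+1)).filter (fun i => i < (f v : ℕ)) = range (f v : ℕ) := by
      ext i
      simp only [mem_filter, mem_range]
      exact ⟨fun h => h.2, fun h => ⟨h.trans (f v).isLt, h⟩⟩
    rw [h2, card_range]

end BaryAux

namespace BaryAux

variable {V : Type*} [DecidableEq V]


lemma surjCount_eq (x : Finset V) (r : ℕ) :
    (Finset.univ.filter
        (fun f : {a // a ∈ x} → Fin r => Function.Surjective f)).card
      = surjCount x.card r := by
  rw [surjCount]
  refine Finset.card_bij' (fun f _ => f ∘ (x.equivFin).symm) (fun f _ => f ∘ x.equivFin)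
    ?hi ?hj ?left ?right
  case hi =>
    intro f hf
    rw [mem_filter] at hf ⊢
    exact ⟨mem_univ _, hf.2.comp (x.equivFin).symm.surjective⟩
  case hj =>
    intro f hf
    rw [mem_filter] at hf ⊢
    exact ⟨mem_univ _, hf.2.comp (x.equivFin).surjective⟩
  case left =>
    intro f _
    funext v
    simp
  case right =>
    intro f _
    funext v
    simp

lemma chain_max {c : Finset (Finset V)} (hne : c.Nonempty)
    (hch : ∀ a ∈ c, ∀ b ∈ c, a ⊆ b ∨ b ⊆ a) : ∃ m ∈ c, ∀ a ∈ c, a ⊆ m := by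
  obtain ⟨m, hm, hmax⟩ : ∃ m ∈ c, ∀ x ∈ c, ¬ m < x := by
    obtain ⟨m, hm⟩ := Finset.exists_maximal hne
    exact ⟨m, hm.1, fun x hx hlt => hlt.not_ge (hm.2 hx hlt.le)⟩
  refine ⟨m, hm, fun a ha => ?_⟩
  rcases hch a ha m hm with h | h
  · exact h
  · by_contra ham
    exact hmax a ha (lt_of_le_of_ne h (fun e => ham (e ▸ Subset.rfl)))

lemma sup_eq_of_max {c : Finset (Finset V)} {m : Finset V} (hm : m ∈ c)
    (hmax : ∀ a ∈ c, a ⊆ m) : c.sup id = m :=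
  le_antisymm (Finset.sup_le (fun a ha => hmax a ha)) (Finset.le_sup (f := id) hm)

lemma fiber_eq (G : Finset (Finset V)) (hG : IsSimplicialComplex G) (k : ℕ)
    {x : Finset V} (hx : x ∈ G) :
    ((barycentric G).filter (fun c => c.card = k + 1)).filter (fun c => c.sup id = x)
      = topChains x (k+1) := by
  ext c
  simp only [mem_filter, barycentric, mem_powerset, mem_topChains]
  constructor
  · rintro ⟨⟨⟨hCG, hne, hch⟩, hcard⟩, hsup⟩
    obtain ⟨m, hm, hmax⟩ := chain_max hne hch
    have hmx : m = x := by rw [← hsup, sup_eq_of_max hm hmax]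
    subst hmx
    exact ⟨fun y hy => hmax y hy, fun y hy => hG.1 y (hCG hy), hch, hm, hcard⟩
  · rintro ⟨hsubx, hne, hch, hxc, hcard⟩
    refine ⟨⟨⟨fun y hy => hG.2 x hx y (hsubx y hy) (hne y hy), ⟨x, hxc⟩, hch⟩, hcard⟩, ?_⟩
    exact sup_eq_of_max hxc hsubx

theorem main (G : Finset (Finset V)) (hG : IsSimplicialComplex G) (k : ℕ) :
    ((barycentric G).filter (fun c => c.card = k + 1)).card
      = ∑ j ∈ Finset.range (G.sup Finset.card),
          surjCount (j + 1) (k + 1) * (G.filter (fun x => x.card = j + 1)).card := by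
  classical
  have hmaps : ∀ c ∈ (barycentric G).filter (fun c => c.card = k+1), c.sup id ∈ G := by
    intro c hc
    rw [mem_filter] at hc
    obtain hb := hc.1
    rw [barycentric, mem_filter, mem_powerset] at hb
    obtain ⟨m, hm, hmax⟩ := chain_max hb.2.1 hb.2.2
    rw [sup_eq_of_max hm hmax]
    exact hb.1 hm
  rw [card_eq_sum_card_fiberwise hmaps]
  have hfib : ∀ x ∈ G,
      (((barycentric G).filter (fun c => c.card = k+1)).filter
        (fun c => c.sup id = x)).card = surjCount x.card (k+1) := by
    intro x hx
    rw [fiber_eq G hG k hx, topChains_card, surjCount_eq]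
  rw [Finset.sum_congr rfl hfib]
  have hmaps2 : ∀ x ∈ G, x.card - 1 ∈ Finset.range (G.sup Finset.card) := by
    intro x hx
    have h1 : 1 ≤ x.card := card_pos.2 (hG.1 x hx)
    have h2 : x.card ≤ G.sup Finset.card := Finset.le_sup hx
    rw [mem_range]
    omega
  rw [← Finset.sum_fiberwise_of_maps_to hmaps2 (fun x => surjCount x.card (k+1))]
  apply Finset.sum_congr rfl
  intro j hj
  have hfe : G.filter (fun x => x.card - 1 = j) = G.filter (fun x => x.card = j+1) := by
    apply filter_congr
    intro x hx
    have h1 : 1 ≤ x.card := card_pos.2 (hG.1 x hx)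
    omega
  rw [hfe, Finset.sum_congr rfl
    (fun x hx => by rw [(mem_filter.1 hx).2] :
      ∀ x ∈ G.filter (fun x => x.card = j+1), surjCount x.card (k+1) = surjCount (j+1) (k+1)),
    Finset.sum_const, smul_eq_mul, mul_comm]

end BaryAux

/-- the `f`-vector of the Barycentric refinement is obtained from the
`f`-vector of `G` via the Barycentric refinement operator: the number of chains of
cardinality `k+1` is `∑_j s(j+1, k+1) · v_j(G)`, where `s(m, r)` counts surjections
from an `m`-set onto an `r`-set (the sum over `j` is truncated at the maximal
cardinality of a simplex of `G`, beyond which `v_j(G) = 0`). -/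
theorem barycentric_f_vector
    {V : Type*} [DecidableEq V] (G : Finset (Finset V))
    (hG : IsSimplicialComplex G) (k : ℕ) :
    ((barycentric G).filter (fun c => c.card = k + 1)).card
      = ∑ j ∈ Finset.range (G.sup Finset.card),
          surjCount (j + 1) (k + 1) * (G.filter (fun x => x.card = j + 1)).card := by
  exact BaryAux.main G hG k
end

section
/- Wu characteristic of a simplex: let x be a nonempty finite set. Then Σ (−1)^(card(y)+card(z)) = (−1)^(card(x)−1), where the sum is over all ordered pairs (y, z) of nonempty subsets y, z ⊆ x with y ∩ z ≠ ∅. In other words, the Wu characteristic of the complete complex on a k-dimensional simplex equals (−1)^k. -/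
/-- Wu characteristic of a simplex: for a nonempty finite set `x`,
the sum of `(−1)^(card y + card z)` over all ordered pairs `(y, z)` of nonempty
subsets of `x` with `y ∩ z ≠ ∅` equals `(−1)^(card x − 1)`. -/
theorem wu_characteristic_of_simplex
    {V : Type*} [DecidableEq V] (x : Finset V) (hx : x.Nonempty) :
    ∑ p ∈ (x.powerset ×ˢ x.powerset).filter (fun p => (p.1 ∩ p.2).Nonempty),
        (-1 : ℤ) ^ (p.1.card + p.2.card)
      = (-1 : ℤ) ^ (x.card - 1) := by
  classical
  have htot : ∑ p ∈ x.powerset ×ˢ x.powerset, (-1 : ℤ) ^ (p.1.card + p.2.card) = 0 := by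
    rw [Finset.sum_product]
    simp_rw [pow_add, ← Finset.mul_sum, ← Finset.sum_mul,
      Finset.sum_powerset_neg_one_pow_card]
    simp [hx.ne_empty]
  have hdisj : ∑ p ∈ (x.powerset ×ˢ x.powerset).filter (fun p => ¬ (p.1 ∩ p.2).Nonempty),
      (-1 : ℤ) ^ (p.1.card + p.2.card) = (-1 : ℤ) ^ x.card := by
    rw [Finset.sum_filter, Finset.sum_product]
    have key : ∀ y ∈ x.powerset,
        (∑ z ∈ x.powerset, if ¬ ((y, z).1 ∩ (y, z).2).Nonempty then (-1 : ℤ) ^ (y.card + z.card) else 0)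
          = (-1 : ℤ) ^ y.card * (if x \ y = ∅ then 1 else 0) := by
      intro y hy
      rw [← Finset.sum_filter]
      have hfilt : x.powerset.filter (fun z => ¬ ((y, z).1 ∩ (y, z).2).Nonempty) = (x \ y).powerset := by
        ext z
        simp only [Finset.mem_filter, Finset.mem_powerset, Finset.not_nonempty_iff_eq_empty, Finset.subset_sdiff]
        constructor
        · rintro ⟨h1, h2⟩
          exact ⟨h1, Finset.disjoint_left.2 fun a ha hay =>
            (Finset.eq_empty_iff_forall_notMem.1 h2 a) (Finset.mem_inter.2 ⟨hay, ha⟩)⟩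
        · rintro ⟨h1, h2⟩
          refine ⟨h1, Finset.eq_empty_iff_forall_notMem.2 fun a ha => ?_⟩
          rcases Finset.mem_inter.1 ha with ⟨h3, h4⟩
          exact Finset.disjoint_left.1 h2 h4 h3
      rw [hfilt]
      simp_rw [pow_add, ← Finset.mul_sum, Finset.sum_powerset_neg_one_pow_card]
    rw [Finset.sum_congr rfl key]
    have : ∀ y ∈ x.powerset,
        (-1 : ℤ) ^ y.card * (if x \ y = ∅ then 1 else 0)
          = if y = x then (-1 : ℤ) ^ x.card else 0 := by
      intro y hy
      rw [Finset.mem_powerset] at hy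
      by_cases h : y = x
      · subst h; simp
      · have : x \ y ≠ ∅ := by
          intro he
          exact h (Finset.Subset.antisymm hy
            (fun a ha => by
              by_contra hay
              exact (Finset.eq_empty_iff_forall_notMem.1 he a)
                (Finset.mem_sdiff.2 ⟨ha, hay⟩)))
        simp [h, this]
    rw [Finset.sum_congr rfl this, Finset.sum_ite_eq' x.powerset x]
    simp
  have hsplit := Finset.sum_filter_add_sum_filter_not (x.powerset ×ˢ x.powerset) (fun p => (p.1 ∩ p.2).Nonempty)
    (fun p => (-1 : ℤ) ^ (p.1.card + p.2.card))
  rw [htot, hdisj] at hsplit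
  have hfin : ∑ p ∈ (x.powerset ×ˢ x.powerset).filter (fun p => (p.1 ∩ p.2).Nonempty),
      (-1 : ℤ) ^ (p.1.card + p.2.card) = -(-1 : ℤ) ^ x.card := by linarith
  obtain ⟨n, hn⟩ : ∃ n, x.card = n + 1 :=
    ⟨x.card - 1, (Nat.succ_pred_eq_of_pos (Finset.card_pos.2 hx)).symm⟩
  rw [hfin, hn]
  simp [pow_succ]
end

section
/- Discrete Hodge theory: let V be a finite-dimensional real inner product space and d : V → V a linear map with d ∘ d = 0, and let d* denote the adjoint of d. Then ker(d + d*) = ker d ∩ ker d*, and dim(ker d ∩ ker d*) = dim ker d − rank d; in particular the nullity of the Hodge operator L = (d + d*)² equals the dimension of the cohomology ker d / im d. -/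
open LinearMap Module Submodule RealInnerProductSpace in
/-- discrete Hodge theory: for a linear map `d` with `d ∘ d = 0` on a
finite-dimensional real inner product space, with adjoint `d*`:
`ker(d + d*) = ker d ∩ ker d*`, its dimension is `dim ker d − rank d`, and the
nullity of the Hodge operator `L = (d + d*)²` equals the dimension of the
cohomology `ker d / im d`. -/
theorem discrete_hodge
    {V : Type*} [NormedAddCommGroup V] [InnerProductSpace ℝ V]
    [FiniteDimensional ℝ V]
    (d : V →ₗ[ℝ] V) (hd : d.comp d = 0) :
    LinearMap.ker (d + LinearMap.adjoint d)
        = LinearMap.ker d ⊓ LinearMap.ker (LinearMap.adjoint d) ∧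
    (Module.finrank ℝ
        ↥(LinearMap.ker d ⊓ LinearMap.ker (LinearMap.adjoint d)) : ℤ)
        = (Module.finrank ℝ (LinearMap.ker d) : ℤ)
          - (Module.finrank ℝ (LinearMap.range d) : ℤ) ∧
    Module.finrank ℝ
        (LinearMap.ker ((d + LinearMap.adjoint d) ∘ₗ (d + LinearMap.adjoint d)))
      = Module.finrank ℝ
          (↥(LinearMap.ker d) ⧸
            (LinearMap.range d).comap (LinearMap.ker d).subtype) := by
  set d' := LinearMap.adjoint d with hd'def
  have hdd : ∀ x, d (d x) = 0 := fun x => by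
    simpa using LinearMap.congr_fun hd x
  -- range d ≤ ker d
  have hRK : LinearMap.range d ≤ LinearMap.ker d := by
    rintro _ ⟨x, rfl⟩
    exact hdd x
  -- ker d' = (range d)ᗮ
  have hkerd' : LinearMap.ker d' = (LinearMap.range d)ᗮ := by
    ext x
    rw [LinearMap.mem_ker, Submodule.mem_orthogonal]
    constructor
    · rintro h _ ⟨y, rfl⟩
      rw [real_inner_comm, ← LinearMap.adjoint_inner_left, ← hd'def, h, inner_zero_left]
    · intro h
      rw [← inner_self_eq_zero (𝕜 := ℝ)]
      rw [hd'def, LinearMap.adjoint_inner_right]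
      exact h _ ⟨_, rfl⟩
  -- ker(d + d') = ker d ⊓ ker d'
  have hker : LinearMap.ker (d + d') = LinearMap.ker d ⊓ LinearMap.ker d' := by
    ext x
    simp only [LinearMap.mem_ker, Submodule.mem_inf, LinearMap.add_apply]
    constructor
    · intro h
      have horth : (inner ℝ (d x) (d' x) : ℝ) = 0 := by
        rw [hd'def, LinearMap.adjoint_inner_right, hdd, inner_zero_left]
      have h1 : (inner ℝ (d x) (d x) : ℝ) = 0 := by
        have := congrArg (fun y => (inner ℝ (y) (d x) : ℝ)) h
        simp only [inner_add_left, inner_zero_left] at this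
        have hsymm : (inner ℝ (d' x) (d x) : ℝ) = 0 := by
          rw [real_inner_comm]; exact horth
        linarith
      have h2 : d x = 0 := inner_self_eq_zero.mp h1
      refine ⟨h2, ?_⟩
      rw [h2, zero_add] at h
      exact h
    · rintro ⟨h1, h2⟩
      rw [h1, h2, add_zero]
  -- dimension of the inf
  have hdim : (Module.finrank ℝ
        ↥(LinearMap.ker d ⊓ LinearMap.ker d') : ℤ)
        = (Module.finrank ℝ (LinearMap.ker d) : ℤ)
          - (Module.finrank ℝ (LinearMap.range d) : ℤ) := by
    have hsup : LinearMap.ker d ⊔ LinearMap.ker d' = ⊤ := by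
      rw [hkerd', eq_top_iff, ← Submodule.sup_orthogonal_of_hasOrthogonalProjection
        (K := LinearMap.range d)]
      exact sup_le_sup hRK le_rfl
    have h1 := Submodule.finrank_sup_add_finrank_inf_eq
      (LinearMap.ker d) (LinearMap.ker d')
    rw [hsup] at h1
    have h2 : Module.finrank ℝ (LinearMap.range d)
        + Module.finrank ℝ (LinearMap.ker d') = Module.finrank ℝ V := by
      rw [hkerd']
      exact Submodule.finrank_add_finrank_orthogonal _
    have h3 : Module.finrank ℝ (⊤ : Submodule ℝ V) = Module.finrank ℝ V :=
      finrank_top ℝ V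
    rw [h3] at h1
    omega
  refine ⟨hker, hdim, ?_⟩
  -- ker of the Hodge operator equals ker (d + d')
  have hself : IsSelfAdjoint (d + d') := by
    rw [hd'def]
    exact (LinearMap.isSelfAdjoint_iff' ).mpr (by
      simp [LinearMap.adjoint_adjoint, add_comm])
  have hkerL : LinearMap.ker ((d + d') ∘ₗ (d + d')) = LinearMap.ker (d + d') := by
    ext x
    simp only [LinearMap.mem_ker, LinearMap.comp_apply]
    constructor
    · intro h
      have h0 : (inner ℝ ((d + d') x) ((d + d') x) : ℝ) = 0 := by
        rw [← LinearMap.adjoint_inner_left, (LinearMap.isSelfAdjoint_iff').mp hself,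
          h, inner_zero_left]
      exact inner_self_eq_zero.mp h0
    · intro h
      rw [h, map_zero]
  -- cohomology dimension
  have hcomap : Module.finrank ℝ
      ((LinearMap.range d).comap (LinearMap.ker d).subtype)
      = Module.finrank ℝ (LinearMap.range d) :=
    (Submodule.comapSubtypeEquivOfLe hRK).finrank_eq
  have hquot := Submodule.finrank_quotient_add_finrank
    ((LinearMap.range d).comap (LinearMap.ker d).subtype)
  rw [hcomap] at hquot
  rw [hkerL, hker]
  omega
end

section
/- McKean–Singer formula: let D and γ be real n×n matrices with γD = −Dγ. Then for every t ∈ ℝ, Tr(γ · exp(−t·D²)) = Tr(γ); i.e. the super trace of the heat kernel exp(−t·D²) is independent of t. -/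
set_option maxHeartbeats 1000000

/-- If `γ` anticommutes with `D`, then `Tr(γ D^k) = 0` for `k ≥ 1`. -/
lemma trace_anticomm_pow
    {n : ℕ} (D γ : Matrix (Fin n) (Fin n) ℝ)
    (hanti : γ * D = -(D * γ)) {k : ℕ} (hk : 1 ≤ k) :
    (γ * D ^ k).trace = 0 := by
  obtain ⟨m, rfl⟩ := Nat.exists_eq_add_of_le hk
  have h1 : γ * D ^ (1 + m) = -(D * (γ * D ^ m)) := by
    rw [pow_add, pow_one, ← mul_assoc, ← mul_assoc, hanti, neg_mul]
  have h2 : (γ * D ^ (1 + m)).trace = -(γ * D ^ (1 + m)).trace := by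
    conv_lhs => rw [h1]
    rw [Matrix.trace_neg, Matrix.trace_mul_comm, mul_assoc, ← pow_succ,
      Nat.add_comm m 1]
  linarith [h2]

/-- McKean–Singer: if `γ` anticommutes with `D` (`γD = −Dγ`), then the
super trace `Tr(γ · exp(−t·D²))` of the heat kernel is independent of `t`: it equals
`Tr(γ)` for every `t ∈ ℝ`. -/
theorem mckean_singer
    {n : ℕ} (D γ : Matrix (Fin n) (Fin n) ℝ)
    (hanti : γ * D = -(D * γ)) (t : ℝ) :
    (γ * NormedSpace.exp (-t • (D ^ 2))).trace = γ.trace := by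
  classical
  letI : SeminormedRing (Matrix (Fin n) (Fin n) ℝ) := Matrix.linftyOpSemiNormedRing
  letI : NormedRing (Matrix (Fin n) (Fin n) ℝ) := Matrix.linftyOpNormedRing
  letI : NormedAlgebra ℝ (Matrix (Fin n) (Fin n) ℝ) := Matrix.linftyOpNormedAlgebra
  have hser : Summable fun k : ℕ => (k.factorial : ℝ)⁻¹ • (-t • (D ^ 2)) ^ k :=
    NormedSpace.expSeries_summable' (𝕂 := ℝ) (-t • (D ^ 2))
  -- the continuous linear map `A ↦ Tr(γ A)`
  let L : Matrix (Fin n) (Fin n) ℝ →ₗ[ℝ] ℝ :=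
    (Matrix.traceLinearMap (Fin n) ℝ ℝ).comp (LinearMap.mulLeft ℝ γ)
  let Lc : Matrix (Fin n) (Fin n) ℝ →L[ℝ] ℝ := L.toContinuousLinearMap
  have hL : ∀ A, Lc A = (γ * A).trace := fun A => rfl
  rw [NormedSpace.exp_eq_tsum (𝕂 := ℝ)]
  have key : (γ * ∑' k : ℕ, (k.factorial : ℝ)⁻¹ • (-t • (D ^ 2)) ^ k).trace
      = ∑' k : ℕ, (γ * ((k.factorial : ℝ)⁻¹ • (-t • (D ^ 2)) ^ k)).trace := by
    rw [← hL]
    rw [Lc.map_tsum hser]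
    exact tsum_congr fun k => hL _
  rw [key]
  rw [tsum_eq_single 0 ?_]
  · simp
  · intro k hk
    have hk1 : 1 ≤ k := Nat.one_le_iff_ne_zero.mpr hk
    have : (-t • (D ^ 2)) ^ k = (-t) ^ k • D ^ (2 * k) := by
      rw [smul_pow, ← pow_mul, mul_comm 2 k]
    rw [this, smul_smul, mul_smul_comm, Matrix.trace_smul,
      trace_anticomm_pow D γ hanti (by omega : 1 ≤ 2 * k), smul_zero]
end

section
/- Atiyah–Bott type heat invariance: let D, γ, U be real n×n matrices with γD = −Dγ and UD = DU. Then for every t ∈ ℝ, Tr(γ·U·exp(−t·D²)) = Tr(γ·U); i.e. the super trace of U against the heat kernel exp(−t·D²) is independent of t. -/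
open Matrix

lemma key_trace_zero {n : ℕ} (D γ U : Matrix (Fin n) (Fin n) ℝ)
    (hanti : γ * D = -(D * γ)) (hcomm : U * D = D * U) (k : ℕ) :
    (γ * U * D ^ (k + 1)).trace = 0 := by
  have hDγ : D * γ = -(γ * D) := by rw [← neg_neg (D * γ), ← hanti]
  have step1 : γ * U * D ^ (k + 1) = (γ * (U * D ^ k)) * D := by
    rw [pow_succ]; noncomm_ring
  have step2 : D * (γ * (U * D ^ k)) = -(γ * U * D ^ (k + 1)) := by
    calc D * (γ * (U * D ^ k)) = (D * γ) * (U * D ^ k) := by noncomm_ring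
    _ = (-(γ * D)) * (U * D ^ k) := by rw [hDγ]
    _ = -(γ * (D * U) * D ^ k) := by noncomm_ring
    _ = -(γ * (U * D) * D ^ k) := by rw [← hcomm]
    _ = -(γ * U * D ^ (k + 1)) := by rw [pow_succ']; noncomm_ring
  have h2 : (γ * U * D ^ (k + 1)).trace = -(γ * U * D ^ (k + 1)).trace := by
    conv_lhs => rw [step1, Matrix.trace_mul_comm, step2, trace_neg]
  linarith

/-- Atiyah–Bott type heat invariance: if `γ` anticommutes with `D`
(`γD = −Dγ`) and `U` commutes with `D` (`UD = DU`), then the super trace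
`Tr(γ·U·exp(−t·D²))` is independent of `t`: it equals `Tr(γ·U)` for all `t ∈ ℝ`. -/
theorem atiyah_bott_heat_invariance
    {n : ℕ} (D γ U : Matrix (Fin n) (Fin n) ℝ)
    (hanti : γ * D = -(D * γ)) (hcomm : U * D = D * U) (t : ℝ) :
    (γ * U * NormedSpace.exp (-t • (D ^ 2))).trace = (γ * U).trace := by
  letI : SeminormedRing (Matrix (Fin n) (Fin n) ℝ) := Matrix.linftyOpSemiNormedRing
  letI : NormedRing (Matrix (Fin n) (Fin n) ℝ) := Matrix.linftyOpNormedRing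
  letI : NormedAlgebra ℝ (Matrix (Fin n) (Fin n) ℝ) := Matrix.linftyOpNormedAlgebra
  -- continuous linear map X ↦ trace (γ * U * X)
  let L : Matrix (Fin n) (Fin n) ℝ →ₗ[ℝ] ℝ :=
    (Matrix.traceLinearMap (Fin n) ℝ ℝ).comp (LinearMap.mulLeft ℝ (γ * U))
  let Lc : Matrix (Fin n) (Fin n) ℝ →L[ℝ] ℝ := ⟨L, L.continuous_of_finiteDimensional⟩
  have hsum : Summable fun k : ℕ => ((k.factorial : ℝ)⁻¹) • (-t • (D ^ 2)) ^ k :=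
    NormedSpace.expSeries_summable' (𝕂 := ℝ) (-t • (D ^ 2))
  have hmap : Lc (NormedSpace.exp (-t • (D ^ 2)))
      = ∑' k : ℕ, Lc (((k.factorial : ℝ)⁻¹) • (-t • (D ^ 2)) ^ k) := by
    rw [NormedSpace.exp_eq_tsum (𝕂 := ℝ)]
    exact Lc.map_tsum hsum
  have hterm : ∀ k : ℕ, Lc (((k.factorial : ℝ)⁻¹) • (-t • (D ^ 2)) ^ k)
      = if k = 0 then (γ * U).trace else 0 := by
    intro k
    have hval : Lc (((k.factorial : ℝ)⁻¹) • (-t • (D ^ 2)) ^ k)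
        = ((k.factorial : ℝ)⁻¹) * ((-t) ^ k * (γ * U * D ^ (2 * k)).trace) := by
      simp only [Lc, L, smul_pow, ContinuousLinearMap.coe_mk', LinearMap.coe_comp,
        Function.comp_apply, LinearMap.mulLeft_apply, Matrix.traceLinearMap_apply,
        Matrix.mul_smul, Matrix.trace_smul, smul_eq_mul, ← pow_mul]
    rw [hval]
    cases k with
    | zero => simp
    | succ k =>
      have : 2 * (k + 1) = (2 * k + 1) + 1 := by omega
      rw [this, key_trace_zero D γ U hanti hcomm]
      simp
  have hfin : Lc (NormedSpace.exp (-t • (D ^ 2))) = (γ * U).trace := by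
    rw [hmap]
    simp_rw [hterm]
    exact (tsum_eq_single 0 (fun b hb => by simp [hb])).trans (by simp)
  simpa [Lc, L, mul_assoc] using hfin
end

section
/- Cohomological Lefschetz number as a flat trace: let D be a symmetric real n×n matrix, γ a real n×n matrix with γ² = I and γD = −Dγ, and U a real n×n matrix with UD = DU, and let P be the matrix of the orthogonal projection of ℝⁿ onto ker D. Then Tr(γ·U) = Tr(γ·U·P); i.e. the super trace of U equals the super trace of the map induced by U on the kernel of D (harmonic forms). -/
section Aux

variable {n : ℕ}

private lemma toEuclideanLin_mul (A B : Matrix (Fin n) (Fin n) ℝ) (x : EuclideanSpace ℝ (Fin n)) :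
    Matrix.toEuclideanLin (A * B) x = Matrix.toEuclideanLin A (Matrix.toEuclideanLin B x) := by
  simp [Matrix.toEuclideanLin_eq_toLin,
    Matrix.toLin_mul (PiLp.basisFun 2 ℝ (Fin n)) (PiLp.basisFun 2 ℝ (Fin n))
      (PiLp.basisFun 2 ℝ (Fin n))]

end Aux

/-- cohomological Lefschetz number as a flat trace: if `D` is a
symmetric real `n×n` matrix, `γ` an involution anticommuting with `D`, `U` a matrix
commuting with `D`, and `P` the matrix of the orthogonal projection of `ℝⁿ` onto
`ker D`, then the super trace of `U` equals the super trace of the map induced by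
`U` on the harmonic space `ker D`: `Tr(γ·U) = Tr(γ·U·P)`. -/
theorem lefschetz_flat_trace
    {n : ℕ} (D γ U P : Matrix (Fin n) (Fin n) ℝ)
    (hD : D.IsSymm) (hγ : γ * γ = 1) (hanti : γ * D = -(D * γ))
    (hcomm : U * D = D * U)
    (hP : Matrix.toEuclideanLin P =
      ((LinearMap.ker (Matrix.toEuclideanLin D)).subtypeL.comp
        (Submodule.orthogonalProjection (LinearMap.ker (Matrix.toEuclideanLin D)))).toLinearMap) :
    (γ * U).trace = (γ * U * P).trace := by
  classical
  set K := LinearMap.ker (Matrix.toEuclideanLin D) with hK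
  have hPapp : ∀ x : EuclideanSpace ℝ (Fin n),
      Matrix.toEuclideanLin P x = (Submodule.orthogonalProjection K x : EuclideanSpace ℝ (Fin n)) := by
    intro x; rw [hP]; rfl
  have hHerm : D.IsHermitian := by
    rwa [Matrix.IsHermitian, Matrix.conjTranspose_eq_transpose_of_trivial]
  have hsymm : (Matrix.toEuclideanLin D).IsSymmetric :=
    Matrix.isHermitian_iff_isSymmetric.mp hHerm
  -- P x lies in K
  have hPmem : ∀ x : EuclideanSpace ℝ (Fin n), Matrix.toEuclideanLin P x ∈ K := by
    intro x; rw [hPapp]; exact (Submodule.orthogonalProjection K x).2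
  -- D * P = 0
  have hDP : D * P = 0 := by
    apply Matrix.toEuclideanLin.injective
    apply LinearMap.ext; intro x
    have := hPmem x
    rw [LinearMap.mem_ker] at this
    simpa [toEuclideanLin_mul] using this
  -- P * D = 0
  have hPD : P * D = 0 := by
    apply Matrix.toEuclideanLin.injective
    apply LinearMap.ext; intro x
    have hmem : Matrix.toEuclideanLin D x ∈ Kᗮ := by
      intro y hy
      have hy0 : Matrix.toEuclideanLin D y = 0 := hy
      calc inner ℝ y (Matrix.toEuclideanLin D x)
          = inner ℝ (Matrix.toEuclideanLin D y) x := (hsymm y x).symm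
        _ = (0 : ℝ) := by rw [hy0]; simp
    have hproj : Submodule.orthogonalProjection K (Matrix.toEuclideanLin D x) = 0 :=
      Submodule.orthogonalProjectionOnto_eq_zero_iff.mpr hmem
    simp [toEuclideanLin_mul, hPapp, hproj]
  -- P fixes K
  have hfix : ∀ x : EuclideanSpace ℝ (Fin n), x ∈ K → Matrix.toEuclideanLin P x = x := by
    intro x hx
    rw [hPapp]
    exact Submodule.starProjection_eq_self_iff.mpr hx
  -- P is idempotent
  have hPP : P * P = P := by
    apply Matrix.toEuclideanLin.injective
    apply LinearMap.ext; intro x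
    have := hfix (Matrix.toEuclideanLin P x) (hPmem x)
    simpa [toEuclideanLin_mul] using this
  -- D + P is invertible
  have hinj : Function.Injective (Matrix.toEuclideanLin (D + P)) := by
    rw [← LinearMap.ker_eq_bot, LinearMap.ker_eq_bot']
    intro x hx
    have hadd : Matrix.toEuclideanLin D x + Matrix.toEuclideanLin P x = 0 := by
      rw [← LinearMap.add_apply, ← map_add]; exact hx
    have hip : (inner ℝ (Matrix.toEuclideanLin D x) (Matrix.toEuclideanLin P x) : ℝ) = 0 := by
      have h0 : Matrix.toEuclideanLin D (Matrix.toEuclideanLin P x) = 0 := by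
        have := congrArg (fun M => Matrix.toEuclideanLin M x) hDP
        simpa [toEuclideanLin_mul] using this
      rw [real_inner_comm, ← hsymm, h0]
      simp
    have hP0 : Matrix.toEuclideanLin P x = -(Matrix.toEuclideanLin D x) :=
      eq_neg_of_add_eq_zero_left (by rw [add_comm]; exact hadd)
    have hD0 : Matrix.toEuclideanLin D x = 0 := by
      rw [hP0, inner_neg_right, neg_eq_zero, inner_self_eq_zero] at hip
      exact hip
    have hxK : x ∈ K := hD0
    rw [← hfix x hxK, hP0, hD0, neg_zero]
  have hUnit : IsUnit (D + P) := by
    rw [← Matrix.mulVec_injective_iff_isUnit]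
    intro a b hab
    have : Matrix.toEuclideanLin (D + P) ((WithLp.equiv 2 _).symm a) =
        Matrix.toEuclideanLin (D + P) ((WithLp.equiv 2 _).symm b) := by
      rw [WithLp.equiv_symm_apply, Matrix.toEuclideanLin_apply_piLp_toLp, Matrix.toEuclideanLin_apply_piLp_toLp,
        hab]
    exact (WithLp.equiv 2 _).symm.injective (hinj this)
  obtain ⟨B, hB1, hB2⟩ := isUnit_iff_exists.mp hUnit
  -- key identities
  have h1 : (1 - P) * (D + P) = D := by
    simp only [sub_mul, mul_add, one_mul, hPD, hPP]; noncomm_ring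
  have h2 : (D + P) * (1 - P) = D := by
    simp only [mul_sub, add_mul, mul_one, hDP, hPP]; noncomm_ring
  have hcommB : B * (1 - P) = (1 - P) * B := by
    calc B * (1 - P) = B * (1 - P) * ((D + P) * B) := by rw [hB1, mul_one]
      _ = B * ((1 - P) * (D + P)) * B := by noncomm_ring
      _ = B * ((D + P) * (1 - P)) * B := by rw [h1, h2]
      _ = (B * (D + P)) * ((1 - P) * B) := by noncomm_ring
      _ = (1 - P) * B := by rw [hB2, one_mul]
  have hBD : B * D = 1 - P := by
    calc B * D = B * ((1 - P) * (D + P)) := by rw [h1]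
      _ = (B * (1 - P)) * (D + P) := by noncomm_ring
      _ = ((1 - P) * B) * (D + P) := by rw [hcommB]
      _ = (1 - P) * (B * (D + P)) := by noncomm_ring
      _ = 1 - P := by rw [hB2, mul_one]
  have hDB : D * B = 1 - P := by
    calc D * B = ((D + P) * (1 - P)) * B := by rw [h2]
      _ = (D + P) * ((1 - P) * B) := by noncomm_ring
      _ = (D + P) * (B * (1 - P)) := by rw [hcommB]
      _ = ((D + P) * B) * (1 - P) := by noncomm_ring
      _ = 1 - P := by rw [hB1, one_mul]
  -- trace computation
  have key : (γ * U * (1 - P)).trace = 0 := by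
    have e1 : γ * U * (1 - P) = γ * U * D * B := by rw [mul_assoc (γ * U), hDB]
    have e2 : γ * U * D * B = -(D * (γ * (U * B))) := by
      calc γ * U * D * B = γ * (U * D) * B := by noncomm_ring
        _ = γ * (D * U) * B := by rw [hcomm]
        _ = (γ * D) * (U * B) := by noncomm_ring
        _ = (-(D * γ)) * (U * B) := by rw [hanti]
        _ = -(D * (γ * (U * B))) := by noncomm_ring
    have e3 : (D * (γ * (U * B))).trace = ((γ * (U * B)) * D).trace := Matrix.trace_mul_comm _ _
    have e4 : (γ * (U * B)) * D = γ * U * (1 - P) := by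
      calc (γ * (U * B)) * D = γ * U * (B * D) := by noncomm_ring
        _ = γ * U * (1 - P) := by rw [hBD]
    have : (γ * U * (1 - P)).trace = -((γ * U * (1 - P)).trace) := by
      conv_lhs => rw [e1, e2]
      rw [Matrix.trace_neg, e3, e4]
    linarith
  have expand : (γ * U * (1 - P)).trace = (γ * U).trace - (γ * U * P).trace := by
    rw [mul_sub, mul_one, Matrix.trace_sub]
  linarith [key, expand]
end

section
/- Isospectrality of Lax deformations: let D : ℝ → M_n(ℝ) be a differentiable matrix-valued function and B : ℝ → M_n(ℝ) a function such that D'(t) = B(t)·D(t) − D(t)·B(t) for all t. Then for every natural number m, the function t ↦ Tr(D(t)^m) is constant; consequently the characteristic polynomial and hence the spectrum of D(t) does not depend on t. -/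
open Matrix Finset

/-- Leibniz-rule derivative of the determinant of a matrix-valued function. -/
lemma hasDerivAt_det_aux {n : ℕ} (M : ℝ → Matrix (Fin n) (Fin n) ℝ)
    (M' : Matrix (Fin n) (Fin n) ℝ) (t : ℝ)
    (h : ∀ i j, HasDerivAt (fun s => M s i j) (M' i j) t) :
    HasDerivAt (fun s => (M s).det) ((Matrix.adjugate (M t) * M').trace) t := by
  have h1 : HasDerivAt (fun s => (M s).det)
      (∑ σ : Equiv.Perm (Fin n), (Equiv.Perm.sign σ : ℤ) *
        ∑ i : Fin n, (∏ j ∈ Finset.univ.erase i, M t (σ j) j) • M' (σ i) i) t := by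
    simp only [Matrix.det_apply']
    exact HasDerivAt.fun_sum fun σ _ =>
      ((HasDerivAt.fun_finsetProd (fun i _ => h (σ i) i))).const_mul _
  convert h1 using 1
  have key : ∀ i : Fin n,
      (∑ σ : Equiv.Perm (Fin n), ((Equiv.Perm.sign σ : ℤ) : ℝ) *
        ((∏ j ∈ Finset.univ.erase i, M t (σ j) j) * M' (σ i) i))
      = ((M t).updateCol i (fun k => M' k i)).det := by
    intro i
    rw [Matrix.det_apply']
    refine Finset.sum_congr rfl fun σ _ => ?_
    congr 1
    rw [← Finset.mul_prod_erase (Finset.univ) _ (Finset.mem_univ i)]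
    rw [Matrix.updateCol_apply, if_pos rfl, mul_comm]
    congr 1
    refine Finset.prod_congr rfl fun j hj => ?_
    rw [Matrix.updateCol_apply, if_neg (Finset.mem_erase.mp hj).1]
  calc (Matrix.adjugate (M t) * M').trace
      = ∑ i : Fin n, ∑ k : Fin n, Matrix.adjugate (M t) i k * M' k i := by
        simp [Matrix.trace, Matrix.diag, Matrix.mul_apply]
    _ = ∑ i : Fin n, ((M t).updateCol i (fun k => M' k i)).det := by
        refine Finset.sum_congr rfl fun i _ => ?_
        rw [← Matrix.cramer_apply, Matrix.cramer_eq_adjugate_mulVec]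
        simp [Matrix.mulVec, dotProduct]
    _ = ∑ i : Fin n, ∑ σ : Equiv.Perm (Fin n), ((Equiv.Perm.sign σ : ℤ) : ℝ) *
        ((∏ j ∈ Finset.univ.erase i, M t (σ j) j) * M' (σ i) i) := by
        refine Finset.sum_congr rfl fun i _ => (key i).symm
    _ = _ := by
        rw [Finset.sum_comm]
        refine Finset.sum_congr rfl fun σ _ => ?_
        rw [Finset.mul_sum]
        refine Finset.sum_congr rfl fun i _ => ?_
        simp [smul_eq_mul]

/-- isospectrality of Lax deformations: if a differentiable family of
matrices `D(t)` satisfies the Lax equation `D'(t) = B(t)·D(t) − D(t)·B(t)`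
(entrywise derivatives), then every trace power `Tr(D(t)^m)` is constant in `t`, and
consequently the characteristic polynomial (hence the spectrum) of `D(t)` does not
depend on `t`. -/
theorem lax_deformation_isospectral
    {n : ℕ} (D B : ℝ → Matrix (Fin n) (Fin n) ℝ)
    (hD : ∀ (t : ℝ) (i j : Fin n),
      HasDerivAt (fun s => D s i j) ((B t * D t - D t * B t) i j) t) :
    (∀ (m : ℕ) (s t : ℝ), (D s ^ m).trace = (D t ^ m).trace) ∧
    (∀ s t : ℝ, (D s).charpoly = (D t).charpoly) := by
  -- entrywise derivative of powers
  have hpow : ∀ (m : ℕ) (t : ℝ) (i j : Fin n),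
      HasDerivAt (fun s => (D s ^ m) i j)
        ((B t * D t ^ m - D t ^ m * B t) i j) t := by
    intro m
    induction m with
    | zero =>
      intro t i j
      simp only [pow_zero, mul_one, one_mul, sub_self, Matrix.zero_apply]
      exact hasDerivAt_const t _
    | succ m ih =>
      intro t i j
      have h1 : HasDerivAt (fun s => ∑ k : Fin n, (D s ^ m) i k * D s k j)
          (∑ k : Fin n, ((B t * D t ^ m - D t ^ m * B t) i k * D t k j
            + (D t ^ m) i k * (B t * D t - D t * B t) k j)) t :=
        HasDerivAt.fun_sum fun k _ => (ih t i k).mul (hD t k j)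
      have e1 : (fun s => (D s ^ (m+1)) i j)
          = fun s => ∑ k : Fin n, (D s ^ m) i k * D s k j := by
        funext s; rw [pow_succ, Matrix.mul_apply]
      have e2 : (B t * D t ^ (m+1) - D t ^ (m+1) * B t) i j
          = ∑ k : Fin n, ((B t * D t ^ m - D t ^ m * B t) i k * D t k j
            + (D t ^ m) i k * (B t * D t - D t * B t) k j) := by
        have : B t * D t ^ (m+1) - D t ^ (m+1) * B t
            = (B t * D t ^ m - D t ^ m * B t) * D t
              + D t ^ m * (B t * D t - D t * B t) := by
          rw [pow_succ]; noncomm_ring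
        rw [this, Matrix.add_apply, Matrix.mul_apply, Matrix.mul_apply,
          ← Finset.sum_add_distrib]
      rw [e1, e2]
      exact h1
  -- trace powers are constant
  have htr : ∀ (m : ℕ) (s t : ℝ), (D s ^ m).trace = (D t ^ m).trace := by
    intro m
    have hderiv : ∀ t : ℝ, HasDerivAt (fun s => (D s ^ m).trace) 0 t := by
      intro t
      have h1 : HasDerivAt (fun s => ∑ i : Fin n, (D s ^ m) i i)
          (∑ i : Fin n, (B t * D t ^ m - D t ^ m * B t) i i) t :=
        HasDerivAt.fun_sum fun i _ => hpow m t i i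
      have e0 : (∑ i : Fin n, (B t * D t ^ m - D t ^ m * B t) i i) = 0 := by
        have : (∑ i : Fin n, (B t * D t ^ m - D t ^ m * B t) i i)
            = (B t * D t ^ m - D t ^ m * B t).trace := rfl
        rw [this, Matrix.trace_sub, Matrix.trace_mul_comm, sub_self]
      rw [e0] at h1
      have e1 : (fun s => (D s ^ m).trace) = fun s => ∑ i : Fin n, (D s ^ m) i i := by
        funext s; rfl
      rw [e1]
      exact h1
    intro s t
    exact is_const_of_deriv_eq_zero (fun x => (hderiv x).differentiableAt)
      (fun x => (hderiv x).deriv) s t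
  refine ⟨htr, ?_⟩
  -- determinant of x•1 - D t is constant in t
  have hdet : ∀ (x : ℝ) (s t : ℝ),
      (x • (1 : Matrix (Fin n) (Fin n) ℝ) - D s).det
        = (x • (1 : Matrix (Fin n) (Fin n) ℝ) - D t).det := by
    intro x
    set M : ℝ → Matrix (Fin n) (Fin n) ℝ := fun s => x • 1 - D s with hM
    have hM' : ∀ t i j, HasDerivAt (fun s => M s i j)
        ((B t * M t - M t * B t) i j) t := by
      intro t i j
      have comm : B t * M t - M t * B t = -(B t * D t - D t * B t) := by
        simp only [hM]
        rw [mul_sub, sub_mul]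
        rw [mul_smul_comm, smul_mul_assoc, mul_one, one_mul]
        noncomm_ring
      rw [comm]
      have : HasDerivAt (fun s => x • (1 : Matrix (Fin n) (Fin n) ℝ) i j - D s i j)
          (0 - (B t * D t - D t * B t) i j) t :=
        (hasDerivAt_const t _).sub (hD t i j)
      simpa [hM] using this
    have hderiv : ∀ t, HasDerivAt (fun s => (M s).det) 0 t := by
      intro t
      have h1 := hasDerivAt_det_aux M (B t * M t - M t * B t) t (hM' t)
      have e0 : (Matrix.adjugate (M t) * (B t * M t - M t * B t)).trace = 0 := by
        rw [mul_sub, Matrix.trace_sub, ← mul_assoc, ← mul_assoc,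
          Matrix.trace_mul_comm (Matrix.adjugate (M t) * B t) (M t),
          ← mul_assoc, Matrix.mul_adjugate, Matrix.adjugate_mul,
          Matrix.trace_mul_comm, sub_self]
      rw [e0] at h1
      exact h1
    intro s t
    exact is_const_of_deriv_eq_zero (fun y => (hderiv y).differentiableAt)
      (fun y => (hderiv y).deriv) s t
  -- conclude charpoly equality
  have heval : ∀ (A : Matrix (Fin n) (Fin n) ℝ) (x : ℝ),
      A.charpoly.eval x = (x • (1 : Matrix (Fin n) (Fin n) ℝ) - A).det := by
    intro A x
    rw [Matrix.charpoly, eval_det, Matrix.matPolyEquiv_charmatrix]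
    congr 1
    simp [Matrix.scalar, Algebra.algebraMap_eq_smul_one]
  intro s t
  apply Polynomial.funext
  intro x
  rw [heval, heval, hdet x s t]
end
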